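/- arXiv:1412.5456 — 2 statements merged into one kernel-verified Lean document; each statement's English description precedes it below -/
import Mathlib

section
/- Let ν, α, β, δ, r > 0 with ν(α+β+δ) < 1 and r < α+β, and let c < ν(r+δ). Then there exist d₀ < 0, κ₁ > 0, and κ₂ > 0 such that, with κ(x) = c + κ₁e^{κ₂x} and π₀ = 1 - r·d₀: (i) d₀(r - κ(π₀)/ν + δ) + κ(π₀) - 1 = 0; (ii) κ(π₀) - ν(α+β+δ) < 0; (iii) ν(r+δ) - κ(π₀) + r(d₀ - ν)κ₁κ₂e^{κ₂π₀} < 0. -/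
theorem stmt_5 (ν α β δ r c : ℝ) (hν : 0 < ν) (hα : 0 < α) (hβ : 0 < β)
    (hδ : 0 < δ) (hr : 0 < r) (h1 : ν * (α + β + δ) < 1) (h2 : r < α + β)
    (hc : c < ν * (r + δ)) :
    ∃ d₀ κ₁ κ₂ : ℝ, d₀ < 0 ∧ 0 < κ₁ ∧ 0 < κ₂ ∧
      (let κ : ℝ → ℝ := fun x => c + κ₁ * Real.exp (κ₂ * x)
       let π₀ : ℝ := 1 - r * d₀
       d₀ * (r - κ π₀ / ν + δ) + κ π₀ - 1 = 0 ∧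
       κ π₀ - ν * (α + β + δ) < 0 ∧
       ν * (r + δ) - κ π₀ + r * (d₀ - ν) * (κ₁ * κ₂ * Real.exp (κ₂ * π₀)) < 0) := by
  set K : ℝ := (ν * (r + δ) + ν * (α + β + δ)) / 2 with hKdef
  have hKlt : K < ν * (α + β + δ) := by
    rw [hKdef]; nlinarith
  have hKgt : ν * (r + δ) < K := by
    rw [hKdef]; nlinarith
  have hK1 : K < 1 := lt_trans hKlt h1
  have hD : r + δ - K / ν < 0 := by
    have : r + δ < K / ν := (lt_div_iff₀ hν).2 (by nlinarith)
    linarith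
  set d₀ : ℝ := (1 - K) / (r + δ - K / ν) with hd0def
  have hd0 : d₀ < 0 := div_neg_of_pos_of_neg (by linarith) hD
  set π₀ : ℝ := 1 - r * d₀ with hπdef
  refine ⟨d₀, (K - c) * Real.exp (-π₀), 1, hd0,
    mul_pos (by linarith) (Real.exp_pos _), one_pos, ?_, ?_, ?_⟩
  all_goals
    simp only [← hπdef]
    have hval : c + (K - c) * Real.exp (-π₀) * Real.exp (1 * π₀) = K := by
      rw [one_mul, mul_assoc, ← Real.exp_add, neg_add_cancel, Real.exp_zero]; ring
  · rw [hval]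
    have h4 : d₀ * (r + δ - K / ν) = 1 - K := by
      rw [hd0def]; exact div_mul_cancel₀ _ hD.ne
    linear_combination h4
  · rw [hval]; linarith
  · rw [hval]
    have h3 : r * (d₀ - ν) * ((K - c) * Real.exp (-π₀) * 1 * Real.exp (1 * π₀)) < 0 := by
      apply mul_neg_of_neg_of_pos
      · apply mul_neg_of_pos_of_neg hr; linarith
      · have hKc : (0:ℝ) < K - c := by linarith
        exact mul_pos (mul_pos (mul_pos hKc (Real.exp_pos _)) one_pos) (Real.exp_pos _)
    linarith
end

section
/- If d₀ < (ν(α+β+δ) - 1)/(α+β - r) with 0 < r < α+β, d₀ < ν, ν(α+β+δ) < 1, and κ(1-rd₀) = (1 - d₀(r+δ))/(1 - d₀/ν), then κ(1-rd₀) < ν(α+β+δ). -/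
theorem stmt_6 (ν α β δ r d₀ : ℝ) (hν : 0 < ν) (hα : 0 < α) (hβ : 0 < β)
    (hδ : 0 < δ) (hr : 0 < r) (h2 : r < α + β) (h1 : ν * (α + β + δ) < 1)
    (hdν : d₀ < ν)
    (hd₀ : d₀ < (ν * (α + β + δ) - 1) / (α + β - r)) :
    (1 - d₀ * (r + δ)) / (1 - d₀ / ν) < ν * (α + β + δ) := by
  have hsub : 0 < α + β - r := by linarith
  have key : d₀ * (α + β - r) < ν * (α + β + δ) - 1 := (lt_div_iff₀ hsub).mp hd₀
  have hden : 0 < 1 - d₀ / ν := by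
    have : d₀ / ν < 1 := (div_lt_one hν).mpr hdν
    linarith
  rw [div_lt_iff₀ hden]
  have : d₀ / ν * ν = d₀ := div_mul_cancel₀ d₀ hν.ne'
  nlinarith [key, hden, hν]
end
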